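/- Let X be a Hilbert space and f : X → (-∞, ∞] proper, lower semicontinuous, convex. For λ > 0 let M_{λf}(x) = inf_z { f(z) + (1/(2λ))‖z - x‖² } be the Moreau envelope. Suppose S = argmin f is nonempty, x̄ ∈ S, and there exist C > 0, r > 0, η ∈ (0, ∞], α ∈ (0,1] such that d(x,S) ≤ C (f(x) - f(x̄))^α for all x ∈ B_r(x̄) with f(x̄) ≤ f(x) < f(x̄) + η. Then there exists C̃ > 0 such that d(x,S) ≤ C̃ (M_{λf}(x) - M_{λf}(x̄))^{min{α, 1/2}} for all x ∈ B_r(x̄) with M_{λf}(x̄) ≤ M_{λf}(x) < M_{λf}(x̄) + η. -/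

import Mathlib

open Metric Set
open Filter

theorem exists_prox_aux {X : Type*} [NormedAddCommGroup X] [InnerProductSpace ℝ X]
    [CompleteSpace X]
    (f : X → EReal) (hbot : ∀ x, f x ≠ ⊥) (x0 : X) (hx0 : f x0 ≠ ⊤)
    (hlsc : LowerSemicontinuous f)
    (hmid : ∀ a b : X, f ((1/2 : ℝ) • a + (1/2 : ℝ) • b) ≤
      (((1/2:ℝ)) : EReal) * f a + (((1/2:ℝ)) : EReal) * f b)
    (xb : X) (hxbmin : ∀ z, f xb ≤ f z)
    (c : ℝ) (hc : 0 < c) (x : X) :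
    ∃ p : X, ∀ z, f p + ((c * ‖p - x‖^2 : ℝ) : EReal) ≤ f z + ((c * ‖z - x‖^2 : ℝ) : EReal) := by
  set g : X → ℝ := fun z => c * ‖z - x‖^2 with hgdef
  have hgc : Continuous g := by fun_prop
  have hg0 : ∀ z, 0 ≤ g z := fun z => by positivity
  set φ : X → EReal := fun z => f z + ((g z : ℝ) : EReal) with hφdef
  have hfxb_ne_top : f xb ≠ ⊤ := fun h => hx0 (top_le_iff.mp (h ▸ hxbmin x0))
  have hlow : ∀ z, f xb ≤ φ z := fun z =>
    le_trans (hxbmin z) (le_add_of_nonneg_right (by exact_mod_cast hg0 z))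
  set m : EReal := ⨅ z, φ z with hmdef
  have hm_le : ∀ z, m ≤ φ z := fun z => iInf_le _ z
  have hm_lb : f xb ≤ m := le_iInf hlow
  have hm_ne_bot : m ≠ ⊥ := fun h => hbot xb (le_bot_iff.mp (h ▸ hm_lb))
  have hφx0_lt : φ x0 < ⊤ := EReal.add_lt_top (lt_top_iff_ne_top.mpr hx0).ne (EReal.coe_lt_top _).ne
  have hm_ne_top : m ≠ ⊤ := ((hm_le x0).trans_lt hφx0_lt).ne
  set mr : ℝ := m.toReal with hmrdef
  have hmr : ((mr : ℝ) : EReal) = m := EReal.coe_toReal hm_ne_top hm_ne_bot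
  -- minimizing sequence
  have hseq : ∀ n : ℕ, ∃ z, φ z < ((mr + (1/2)^n : ℝ) : EReal) := by
    intro n
    have h1 : m < ((mr + (1/2)^n : ℝ) : EReal) := by
      rw [← hmr, EReal.coe_lt_coe_iff]
      have : (0:ℝ) < (1/2)^n := by positivity
      linarith
    exact iInf_lt_iff.mp h1
  choose u hu using hseq
  have hfu_ne_top : ∀ n, f (u n) ≠ ⊤ := by
    intro n h
    have := hu n
    rw [hφdef] at this
    simp only [h] at this
    rw [EReal.top_add_of_ne_bot (by simp)] at this
    exact (not_top_lt this).elim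
  set F : ℕ → ℝ := fun n => (f (u n)).toReal with hFdef
  have hfu : ∀ n, ((F n : ℝ) : EReal) = f (u n) := fun n => EReal.coe_toReal (hfu_ne_top n) (hbot _)
  set φr : ℕ → ℝ := fun n => F n + g (u n) with hφrdef
  have hφu : ∀ n, φ (u n) = ((φr n : ℝ) : EReal) := by
    intro n
    rw [hφdef]
    simp only
    rw [← hfu n, hφrdef]
    exact_mod_cast rfl
  have hφr_lt : ∀ n, φr n < mr + (1/2)^n := fun n => by
    have := hu n; rw [hφu n] at this; exact_mod_cast this
  have hφr_ge : ∀ n, mr ≤ φr n := fun n => by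
    have := hm_le (u n); rw [hφu n, ← hmr] at this; exact_mod_cast this
  have key : ∀ n k, (c/4) * ‖u n - u k‖^2 ≤ (1/2:ℝ)^n + (1/2)^k := by
    intro n k
    set w := (1/2:ℝ) • u n + (1/2:ℝ) • u k with hwdef
    have hfw : f w ≤ ((F n / 2 + F k / 2 : ℝ) : EReal) := by
      have h := hmid (u n) (u k)
      rw [← hfu n, ← hfu k] at h
      refine h.trans (le_of_eq ?_)
      exact_mod_cast congrArg (fun t : ℝ => (t : EReal)) (by ring : (1/2*F n + 1/2*F k : ℝ) = F n/2 + F k/2)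
    have h1 : ((mr : ℝ) : EReal) ≤ ((F n / 2 + F k / 2 + g w : ℝ) : EReal) := by
      rw [hmr]
      refine (hm_le w).trans ?_
      rw [show ((F n / 2 + F k / 2 + g w : ℝ) : EReal)
          = ((F n/2 + F k/2 : ℝ) : EReal) + ((g w : ℝ) : EReal) from by exact_mod_cast rfl]
      exact add_le_add hfw le_rfl
    have h2 : mr ≤ F n / 2 + F k / 2 + g w := by exact_mod_cast h1
    have hwx : ‖w - x‖^2 = (‖u n - x‖^2 + ‖u k - x‖^2)/2 - ‖u n - u k‖^2/4 := by
      have hw2 : w - x = (1/2:ℝ) • ((u n - x) + (u k - x)) := by rw [hwdef]; module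
      have hpar := parallelogram_law_with_norm ℝ (u n - x) (u k - x)
      have hd : (u n - x) - (u k - x) = u n - u k := by abel
      rw [hd] at hpar
      rw [hw2, norm_smul]
      simp only [Real.norm_eq_abs]
      rw [abs_of_pos (by norm_num : (0:ℝ) < 1/2)]
      nlinarith [hpar]
    have hgw : g w = c * ‖w - x‖^2 := rfl
    have hgn : g (u n) = c * ‖u n - x‖^2 := rfl
    have hgk : g (u k) = c * ‖u k - x‖^2 := rfl
    have hln := hφr_lt n
    have hlk := hφr_lt k
    rw [hφrdef] at hln hlk
    simp only at hln hlk
    rw [hgw, hwx] at h2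
    rw [hgn] at hln
    rw [hgk] at hlk
    nlinarith [hc.le]
  have hcauchy : CauchySeq u := by
    rw [Metric.cauchySeq_iff]
    intro ε hε
    obtain ⟨N, hN⟩ := exists_pow_lt_of_lt_one
      (show (0:ℝ) < (c/8)*ε^2 by positivity) (by norm_num : (1/2:ℝ) < 1)
    refine ⟨N, fun a ha b hb => ?_⟩
    have h1 := key a b
    have h2 : (1/2:ℝ)^a ≤ (1/2)^N := pow_le_pow_of_le_one (by norm_num) (by norm_num) ha
    have h3 : (1/2:ℝ)^b ≤ (1/2)^N := pow_le_pow_of_le_one (by norm_num) (by norm_num) hb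
    have h5 : ‖u a - u b‖^2 < ε^2 := by nlinarith
    rw [dist_eq_norm]
    nlinarith [norm_nonneg (u a - u b)]
  obtain ⟨p, hp⟩ := cauchySeq_tendsto_of_complete hcauchy
  have hφp : φ p ≤ m := by
    by_contra hcon
    push_neg at hcon
    obtain ⟨y, hy1, hy2⟩ := EReal.exists_between_coe_real hcon
    have hmy : mr < y := by rw [← hmr] at hy1; exact_mod_cast hy1
    obtain ⟨s, hs1, hs2⟩ : ∃ s : ℝ, (s:EReal) < f p ∧ y - s < g p := by
      by_cases hpt : f p = ⊤
      · exact ⟨y - g p + 1, by rw [hpt]; exact EReal.coe_lt_top _, by linarith⟩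
      · have hfp : ((f p).toReal : EReal) = f p := EReal.coe_toReal hpt (hbot p)
        have h6 : (y:EReal) < (((f p).toReal + g p : ℝ) : EReal) := by
          rw [hφdef] at hy2
          simp only at hy2
          rw [← hfp] at hy2
          exact hy2.trans_le (le_of_eq (by exact_mod_cast rfl))
        have h7 : y - g p < (f p).toReal := by
          have := EReal.coe_lt_coe_iff.mp h6; linarith
        obtain ⟨s, ha, hb⟩ := exists_between h7
        exact ⟨s, by rw [← hfp]; exact_mod_cast hb, by linarith⟩
    have hev1 : ∀ᶠ n in atTop, (s:EReal) < f (u n) := hp.eventually (hlsc p (s:EReal) hs1)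
    have hev2 : ∀ᶠ n in atTop, y - s < g (u n) :=
      ((hgc.continuousAt (x := p)).tendsto.comp hp).eventually_const_lt hs2
    have hev3 : ∀ᶠ n in atTop, mr + (1/2:ℝ)^n < y := by
      have ht : Tendsto (fun n : ℕ => mr + (1/2:ℝ)^n) atTop (nhds (mr + 0)) :=
        tendsto_const_nhds.add (tendsto_pow_atTop_nhds_zero_of_lt_one (by norm_num) (by norm_num))
      rw [add_zero] at ht
      exact ht.eventually_lt_const hmy
    obtain ⟨n, h1, h2, h3⟩ := (hev1.and (hev2.and hev3)).exists
    have hlt : (y : EReal) < φ (u n) := by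
      calc (y:EReal) = ((s + (y - s) : ℝ) : EReal) := by norm_num
        _ < ((s + g (u n) : ℝ) : EReal) := by
            exact_mod_cast (by linarith [h2] : s + (y-s) < s + g (u n))
        _ = (s : EReal) + ((g (u n) : ℝ) : EReal) := by exact_mod_cast rfl
        _ ≤ f (u n) + ((g (u n) : ℝ) : EReal) := add_le_add h1.le le_rfl
        _ = φ (u n) := rfl
    have hgt : φ (u n) < (y : EReal) :=
      (hu n).trans (by exact_mod_cast h3)
    exact absurd (hlt.trans hgt) (lt_irrefl _)
  exact ⟨p, fun z => (hφp.trans (hm_le z) : φ p ≤ φ z)⟩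



theorem prox_vi_aux {X : Type*} [NormedAddCommGroup X] [InnerProductSpace ℝ X]
    (f : X → EReal) (hbot : ∀ x, f x ≠ ⊥)
    (hconv : ∀ x y : X, ∀ t : ℝ, 0 ≤ t → t ≤ 1 →
      f (t • x + (1 - t) • y) ≤ (t : EReal) * f x + ((1 - t : ℝ) : EReal) * f y)
    (xb : X) (hxbmin : ∀ z, f xb ≤ f z) (hfxb_ne_top : f xb ≠ ⊤)
    (c : ℝ) (hc : 0 < c) (x p : X)
    (hp : ∀ z, f p + ((c * ‖p - x‖^2 : ℝ) : EReal) ≤ f z + ((c * ‖z - x‖^2 : ℝ) : EReal)) :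
    (inner ℝ (x - p) (xb - p) : ℝ) ≤ 0 := by
  have hfp_ne_top : f p ≠ ⊤ := by
    intro h
    have := hp xb
    rw [h, EReal.top_add_of_ne_bot (EReal.coe_ne_bot _)] at this
    exact (EReal.add_lt_top (lt_top_iff_ne_top.mpr hfxb_ne_top).ne (EReal.coe_lt_top _).ne).ne
      (top_le_iff.mp this)
  have hfxb : ((f xb).toReal : EReal) = f xb := EReal.coe_toReal hfxb_ne_top (hbot xb)
  have hfp : ((f p).toReal : EReal) = f p := EReal.coe_toReal hfp_ne_top (hbot p)
  set Fxb := (f xb).toReal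
  set Fp := (f p).toReal
  have hFle : Fxb ≤ Fp := EReal.toReal_le_toReal (hxbmin p) (hbot xb) hfp_ne_top
  set A : ℝ := 2 * c * (inner ℝ (p - x) (xb - p) : ℝ) with hAdef
  set B : ℝ := c * ‖xb - p‖^2 with hBdef
  have hB0 : 0 ≤ B := by positivity
  have key : ∀ t : ℝ, 0 < t → t ≤ 1 → 0 ≤ A + t * B := by
    intro t ht0 ht1
    set z := t • xb + (1-t) • p with hzdef
    have hfz : f z ≤ ((t * Fxb + (1-t) * Fp : ℝ) : EReal) := by
      have h := hconv xb p t ht0.le ht1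
      rw [← hfxb, ← hfp] at h
      refine h.trans (le_of_eq ?_)
      exact_mod_cast rfl
    have h1 : ((Fp + c * ‖p - x‖^2 : ℝ) : EReal) ≤ ((t * Fxb + (1-t) * Fp + c * ‖z - x‖^2 : ℝ) : EReal) := by
      have h2 := hp z
      rw [← hfp] at h2
      refine le_trans (le_of_eq (by exact_mod_cast rfl)) (h2.trans ?_)
      rw [show ((t * Fxb + (1-t) * Fp + c * ‖z - x‖^2 : ℝ) : EReal)
          = ((t * Fxb + (1-t) * Fp : ℝ) : EReal) + ((c * ‖z - x‖^2 : ℝ) : EReal) from by exact_mod_cast rfl]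
      exact add_le_add hfz le_rfl
    have h2 : Fp + c * ‖p - x‖^2 ≤ t * Fxb + (1-t) * Fp + c * ‖z - x‖^2 := by exact_mod_cast h1
    have hz : z - x = (p - x) + t • (xb - p) := by rw [hzdef]; module
    have hnz : ‖z - x‖^2 = ‖p - x‖^2 + 2 * (t * (inner ℝ (p - x) (xb - p) : ℝ)) + t^2 * ‖xb - p‖^2 := by
      rw [hz, norm_add_sq_real, real_inner_smul_right, norm_smul, Real.norm_eq_abs]
      rw [mul_pow, sq_abs]
    rw [hnz] at h2
    have h3 : 0 ≤ t * ((Fxb - Fp) + A + t * B) := by rw [hAdef, hBdef]; nlinarith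
    have h4 : 0 ≤ (Fxb - Fp) + A + t * B := nonneg_of_mul_nonneg_right h3 ht0
    linarith
  have hA : 0 ≤ A := by
    rw [← add_zero A]
    refine le_of_forall_pos_le_add ?_
    intro ε hε
    have ht0 : 0 < min 1 (ε / (B+1)) := lt_min one_pos (by positivity)
    have ht1 : min 1 (ε / (B+1)) ≤ 1 := min_le_left _ _
    have h := key _ ht0 ht1
    have h5 : min 1 (ε / (B+1)) * B ≤ ε := by
      have h6 : min 1 (ε / (B+1)) ≤ ε / (B+1) := min_le_right _ _
      have h7 : ε / (B+1) * B ≤ ε := by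
        rw [div_mul_eq_mul_div, div_le_iff₀ (by linarith)]
        nlinarith
      calc min 1 (ε / (B+1)) * B ≤ ε / (B+1) * B := by nlinarith
        _ ≤ ε := h7
    linarith
  have : 0 ≤ (inner ℝ (p - x) (xb - p) : ℝ) := by
    rw [hAdef] at hA; nlinarith
  have hneg : (inner ℝ (x - p) (xb - p) : ℝ) = - (inner ℝ (p - x) (xb - p) : ℝ) := by
    rw [show x - p = -(p - x) from by abel, inner_neg_left]
  rw [hneg]
  linarith


/-- Hölder growth error bound transfers from `f` to its Moreau envelope
`M_{λf}(x) = inf_z { f z + ‖z - x‖²/(2λ) }`, with exponent `min{α, 1/2}`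
(Corollary 2.2 / prop:GEB). Here `η ∈ (0, ∞]` is encoded as `η : EReal` with `0 < η`. -/
theorem stmt_7
    {X : Type*} [NormedAddCommGroup X] [InnerProductSpace ℝ X] [CompleteSpace X]
    (f : X → EReal)
    (hproper : (∀ x, f x ≠ ⊥) ∧ ∃ x, f x ≠ ⊤)
    (hlsc : LowerSemicontinuous f)
    (hconv : ∀ x y : X, ∀ t : ℝ, 0 ≤ t → t ≤ 1 →
      f (t • x + (1 - t) • y) ≤ (t : EReal) * f x + ((1 - t : ℝ) : EReal) * f y)
    (lam : ℝ) (hlam : 0 < lam)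
    (M : X → EReal)
    (hM : ∀ x, M x = ⨅ z : X, (f z + ((1/(2*lam) * ‖z - x‖^2 : ℝ) : EReal)))
    (S : Set X) (hS : S = {x | ∀ y, f x ≤ f y}) (hSne : S.Nonempty)
    (xb : X) (hxb : xb ∈ S)
    (C r : ℝ) (hC : 0 < C) (hr : 0 < r)
    (η : EReal) (hη : 0 < η)
    (α : ℝ) (hα0 : 0 < α) (hα1 : α ≤ 1)
    (hgrowth : ∀ x ∈ ball xb r, f xb ≤ f x → f x < f xb + η →
      infDist x S ≤ C * ((f x).toReal - (f xb).toReal) ^ α) :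
    ∃ Ct : ℝ, 0 < Ct ∧ ∀ x ∈ ball xb r, M xb ≤ M x → M x < M xb + η →
      infDist x S ≤ Ct * ((M x).toReal - (M xb).toReal) ^ (min α (1/2 : ℝ)) := by
  obtain ⟨hbot, x0, hx0⟩ := hproper
  have hxbmin : ∀ z, f xb ≤ f z := by rw [hS] at hxb; exact hxb
  have hfxb_ne_top : f xb ≠ ⊤ := fun h => hx0 (top_le_iff.mp (h ▸ hxbmin x0))
  set c : ℝ := 1/(2*lam) with hcdef
  have hc : 0 < c := by positivity
  have hmid : ∀ a b : X, f ((1/2:ℝ) • a + (1/2:ℝ) • b) ≤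
      ((1/2:ℝ):EReal) * f a + ((1/2:ℝ):EReal) * f b := by
    intro a b
    have h := hconv a b (1/2) (by norm_num) (by norm_num)
    rw [show (1 - 1/2 : ℝ) = 1/2 from by norm_num] at h
    exact h
  have hMxb : M xb = f xb := by
    rw [hM]
    refine le_antisymm (le_trans (iInf_le _ xb) (le_of_eq (by simp)))
      (le_iInf fun z => (hxbmin z).trans (le_add_of_nonneg_right
        (by exact_mod_cast (by positivity : (0:ℝ) ≤ c * ‖z - xb‖^2))))
  have hMxb_ne_bot : M xb ≠ ⊥ := by rw [hMxb]; exact hbot xb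
  set β := min α (1/2:ℝ) with hβdef
  have hβ0 : 0 < β := lt_min hα0 (by norm_num)
  refine ⟨r + Real.sqrt (2*lam) + C, by positivity, fun x hxball hMle hMlt => ?_⟩
  obtain ⟨p, hp⟩ := exists_prox_aux f hbot x0 hx0 hlsc hmid xb hxbmin c hc x
  have hMx : M x = f p + ((c * ‖p - x‖^2 : ℝ) : EReal) := by
    rw [hM]; exact le_antisymm (iInf_le _ p) (le_iInf hp)
  have hMx_ne_top : M x ≠ ⊤ := (hMlt.trans_le le_top).ne
  have hfp_le_Mx : f p ≤ M x := by
    rw [hMx]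
    exact le_add_of_nonneg_right (by exact_mod_cast (by positivity : (0:ℝ) ≤ c * ‖p - x‖^2))
  have hfp_ne_top : f p ≠ ⊤ := fun h => hMx_ne_top (top_le_iff.mp (h ▸ hfp_le_Mx))
  have hfp : ((f p).toReal : EReal) = f p := EReal.coe_toReal hfp_ne_top (hbot p)
  set Fp := (f p).toReal with hFpdef
  set Fxb := (f xb).toReal with hFxbdef
  have hMxr : (M x).toReal = Fp + c * ‖p - x‖^2 := by
    rw [hMx, ← hfp, show ((Fp:ℝ):EReal) + ((c * ‖p - x‖^2 : ℝ):EReal)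
      = ((Fp + c * ‖p - x‖^2 : ℝ):EReal) from by exact_mod_cast rfl, EReal.toReal_coe]
  have hMxbr : (M xb).toReal = Fxb := by rw [hMxb]
  have hFle : Fxb ≤ Fp := EReal.toReal_le_toReal (hxbmin p) (hbot xb) hfp_ne_top
  set t := (M x).toReal - (M xb).toReal with htdef
  have ht0 : 0 ≤ t := sub_nonneg.mpr (EReal.toReal_le_toReal hMle hMxb_ne_bot hMx_ne_top)
  have hq0 : (0:ℝ) ≤ c * ‖p - x‖^2 := by positivity
  have hq_le : c * ‖p - x‖^2 ≤ t := by rw [htdef, hMxr, hMxbr]; linarith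
  have hFp_le : Fp - Fxb ≤ t := by rw [htdef, hMxr, hMxbr]; linarith
  have hip := prox_vi_aux f hbot hconv xb hxbmin hfxb_ne_top c hc x p hp
  have hpball : p ∈ ball xb r := by
    rw [mem_ball, dist_eq_norm] at hxball ⊢
    have hexp : ‖x - xb‖^2 = ‖x - p‖^2 + 2*(inner ℝ (x-p) (p - xb) : ℝ) + ‖p - xb‖^2 := by
      rw [show x - xb = (x - p) + (p - xb) from by abel, norm_add_sq_real]
    have hinner : (inner ℝ (x-p) (p - xb) : ℝ) = - (inner ℝ (x-p) (xb - p) : ℝ) := by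
      rw [show p - xb = -(xb - p) from by abel, inner_neg_right]
    have h2 : ‖p - xb‖^2 ≤ ‖x - xb‖^2 := by linarith [sq_nonneg ‖x - p‖]
    nlinarith [norm_nonneg (p - xb), norm_nonneg (x - xb)]
  have hflt : f p < f xb + η := lt_of_le_of_lt hfp_le_Mx (by rw [← hMxb]; exact hMlt)
  have hgr := hgrowth p hpball (hxbmin p) hflt
  have hd : dist x p ≤ Real.sqrt (2*lam) * t ^ (1/2:ℝ) := by
    have hcl : c * (2*lam) = 1 := by rw [hcdef]; field_simp
    have h1 : ‖x - p‖^2 ≤ 2*lam*t := by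
      rw [norm_sub_rev]
      nlinarith [mul_le_mul_of_nonneg_left hq_le (by positivity : (0:ℝ) ≤ 2*lam)]
    have h2 : ‖x - p‖ ≤ Real.sqrt (2*lam*t) := by
      have h3 := Real.sqrt_le_sqrt h1
      rwa [Real.sqrt_sq (norm_nonneg _)] at h3
    rw [Real.sqrt_mul (by positivity) t, Real.sqrt_eq_rpow t] at h2
    rw [dist_eq_norm]
    exact h2
  have hchain : infDist x S ≤ C * (Fp - Fxb) ^ α + Real.sqrt (2*lam) * t ^ (1/2:ℝ) :=
    (infDist_le_infDist_add_dist (y := p)).trans (add_le_add hgr hd)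
  have hrα : (Fp - Fxb) ^ α ≤ t ^ α := Real.rpow_le_rpow (by linarith) hFp_le hα0.le
  have htβ0 : 0 ≤ t ^ β := Real.rpow_nonneg ht0 _
  rcases le_or_gt t 1 with hcase | hcase
  · have h1 : t ^ α ≤ t ^ β ∧ t ^ (1/2:ℝ) ≤ t ^ β := by
      rcases eq_or_lt_of_le ht0 with h0 | h0
      · rw [← h0, Real.zero_rpow hα0.ne', Real.zero_rpow hβ0.ne',
          Real.zero_rpow (by norm_num : (1/2:ℝ) ≠ 0)]
        exact ⟨le_refl _, le_refl _⟩
      · exact ⟨Real.rpow_le_rpow_of_exponent_ge h0 hcase (min_le_left _ _),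
          Real.rpow_le_rpow_of_exponent_ge h0 hcase (min_le_right _ _)⟩
    have hs := Real.sqrt_nonneg (2*lam)
    calc infDist x S ≤ C * (Fp - Fxb) ^ α + Real.sqrt (2*lam) * t ^ (1/2:ℝ) := hchain
      _ ≤ C * t^β + Real.sqrt (2*lam) * t^β :=
          add_le_add (mul_le_mul_of_nonneg_left (hrα.trans h1.1) hC.le)
            (mul_le_mul_of_nonneg_left h1.2 hs)
      _ ≤ (r + Real.sqrt (2*lam) + C) * t^β := by
          have hmul : 0 ≤ r * t^β := mul_nonneg hr.le htβ0
          have hring : (r + Real.sqrt (2*lam) + C) * t^β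
              = r * t^β + Real.sqrt (2*lam) * t^β + C * t^β := by ring
          linarith
  · have h1 : 1 ≤ t ^ β := Real.one_le_rpow hcase.le hβ0.le
    have h2 : infDist x S ≤ r := (infDist_le_dist_of_mem hxb).trans (mem_ball.mp hxball).le
    calc infDist x S ≤ r := h2
      _ = r * 1 := (mul_one r).symm
      _ ≤ r * t^β := mul_le_mul_of_nonneg_left h1 hr.le
      _ ≤ (r + Real.sqrt (2*lam) + C) * t^β := by
          have hm1 : 0 ≤ Real.sqrt (2*lam) * t^β := mul_nonneg (Real.sqrt_nonneg (2*lam)) htβ0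
          have hm2 : 0 ≤ C * t^β := mul_nonneg hC.le htβ0
          have hring : (r + Real.sqrt (2*lam) + C) * t^β
              = r * t^β + Real.sqrt (2*lam) * t^β + C * t^β := by ring
          linarith
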